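/- With the setup of the conditional-independent coupling, det(D) = det(A) · det(B) / det(C), i.e., the determinant of D = (Ã + B̃ - C̃)^{-1} equals det(A)det(B)det(C)^{-1}. -/

import Mathlib

open Matrix

private lemma dot_submatrix_eq {m n : Type*} [Fintype m] [Fintype n] [DecidableEq n]
    (M : Matrix n n ℝ) (e : m → n) (x : m → ℝ) :
    dotProduct (fun j => ∑ i, if e i = j then x i else 0)
      (M *ᵥ (fun j => ∑ i, if e i = j then x i else 0)) =
    dotProduct x ((M.submatrix e e) *ᵥ x) := by
  classical
  simp only [dotProduct, mulVec, submatrix_apply]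
  have h1 : ∀ j, (∑ k, M j k * ∑ i', (if e i' = k then x i' else 0))
      = ∑ i', M j (e i') * x i' := by
    intro j
    simp only [Finset.mul_sum, mul_ite, mul_zero]
    rw [Finset.sum_comm]
    simp [Finset.sum_ite_eq]
  simp only [h1]
  simp only [Finset.sum_mul, ite_mul, zero_mul]
  rw [Finset.sum_comm]
  simp [Finset.sum_ite_eq]

/-- A principal submatrix (along an injective map) of a positive definite real matrix
is positive definite. -/
lemma posDef_submatrix_inj {m n : Type*} [Fintype m] [Fintype n] [DecidableEq n]
    {M : Matrix n n ℝ} (hM : M.PosDef) {e : m → n} (he : Function.Injective e) :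
    (M.submatrix e e).PosDef := by
  exact hM.submatrix he

variable {Q : Type*} [Fintype Q] [DecidableEq Q]

/-- Zero-extension of a matrix indexed by a finset `X ⊆ Q` to a `Q × Q` matrix. -/
def zeroExtend {X : Finset Q} (A : Matrix X X ℝ) : Matrix Q Q ℝ :=
  Matrix.of fun p q =>
    if hp : p ∈ X then if hq : q ∈ X then A ⟨p, hp⟩ ⟨q, hq⟩ else 0 else 0

/-- The determinant of the coupling `D = (Ã + B̃ - C̃)⁻¹` equals
`det(A) det(B) / det(C)`. -/
theorem coupling_det (X Y : Finset Q) (hQ : X ∪ Y = Finset.univ)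
    (A : Matrix X X ℝ) (B : Matrix Y Y ℝ)
    (C : Matrix (X ∩ Y : Finset Q) (X ∩ Y : Finset Q) ℝ)
    (hA : A.PosDef) (hB : B.PosDef)
    (hAC : ∀ i j : (X ∩ Y : Finset Q),
      A ⟨i, Finset.mem_of_mem_inter_left i.2⟩ ⟨j, Finset.mem_of_mem_inter_left j.2⟩ = C i j)
    (hBC : ∀ i j : (X ∩ Y : Finset Q),
      B ⟨i, Finset.mem_of_mem_inter_right i.2⟩ ⟨j, Finset.mem_of_mem_inter_right j.2⟩ = C i j) :
    (zeroExtend A⁻¹ + zeroExtend B⁻¹ - zeroExtend C⁻¹)⁻¹.det =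
      A.det * B.det / C.det := by
  classical
  have hWX : ∀ q : Q, q ∉ Y → q ∈ X := by
    intro q h
    rcases Finset.mem_union.mp (hQ ▸ Finset.mem_univ q) with h' | h'
    · exact h'
    · exact absurd h' h
  have hVY : ∀ q : Q, q ∉ X → q ∈ Y := by
    intro q h
    rcases Finset.mem_union.mp (hQ ▸ Finset.mem_univ q) with h' | h'
    · exact absurd h' h
    · exact h'
  -- embeddings
  set iW : {q : Q // q ∉ Y} → X := fun w => ⟨w.1, hWX _ w.2⟩ with hiW
  set iZX : ((X ∩ Y : Finset Q) : Type _) → X :=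
    fun z => ⟨z.1, Finset.mem_of_mem_inter_left z.2⟩ with hiZX
  set iZY : ((X ∩ Y : Finset Q) : Type _) → Y :=
    fun z => ⟨z.1, Finset.mem_of_mem_inter_right z.2⟩ with hiZY
  set iV : {q : Q // q ∉ X} → Y := fun v => ⟨v.1, hVY _ v.2⟩ with hiV
  have hiWinj : Function.Injective iW := by
    intro a b h
    rw [Subtype.ext_iff] at h
    exact Subtype.ext h
  have hiZXinj : Function.Injective iZX := by
    intro a b h
    rw [Subtype.ext_iff] at h
    exact Subtype.ext h
  -- equivalences
  set eX : {q : Q // q ∉ Y} ⊕ ((X ∩ Y : Finset Q) : Type _) ≃ X :=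
    { toFun := Sum.elim iW iZX
      invFun := fun x => if h : (x : Q) ∈ Y then
          Sum.inr ⟨x, Finset.mem_inter.mpr ⟨x.2, h⟩⟩ else Sum.inl ⟨x, h⟩
      left_inv := by
        rintro (w | z)
        · simp [iW, w.2]
        · simp [iZX, Finset.mem_of_mem_inter_right z.2]
      right_inv := by
        intro x
        by_cases h : (x : Q) ∈ Y <;> simp [h, iW, iZX] } with heX
  set eY : ((X ∩ Y : Finset Q) : Type _) ⊕ {q : Q // q ∉ X} ≃ Y :=
    { toFun := Sum.elim iZY iV
      invFun := fun y => if h : (y : Q) ∈ X then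
          Sum.inl ⟨y, Finset.mem_inter.mpr ⟨h, y.2⟩⟩ else Sum.inr ⟨y, h⟩
      left_inv := by
        rintro (z | v)
        · simp [iZY, Finset.mem_of_mem_inter_left z.2]
        · simp [iV, v.2]
      right_inv := by
        intro y
        by_cases h : (y : Q) ∈ X <;> simp [h, iZY, iV] } with heY
  set e : {q : Q // q ∉ Y} ⊕ (((X ∩ Y : Finset Q) : Type _) ⊕ {q : Q // q ∉ X}) ≃ Q :=
    { toFun := Sum.elim Subtype.val (Sum.elim Subtype.val Subtype.val)
      invFun := fun q => if hx : q ∈ X then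
          (if hy : q ∈ Y then Sum.inr (Sum.inl ⟨q, Finset.mem_inter.mpr ⟨hx, hy⟩⟩)
           else Sum.inl ⟨q, hy⟩)
        else Sum.inr (Sum.inr ⟨q, hx⟩)
      left_inv := by
        rintro (w | z | v)
        · simp [hWX _ w.2, w.2]
        · simp [Finset.mem_of_mem_inter_left z.2, Finset.mem_of_mem_inter_right z.2]
        · simp [v.2]
      right_inv := by
        intro q
        by_cases hx : q ∈ X <;> by_cases hy : q ∈ Y <;> simp [hx, hy, hVY] } with he
  -- blocks of A⁻¹ and A
  set A' := A⁻¹ with hA'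
  set B' := B⁻¹ with hB'
  set C' := C⁻¹ with hC'
  set P := A'.submatrix iW iW with hP
  set Qm := A'.submatrix iW iZX with hQm
  set Qt := A'.submatrix iZX iW with hQt
  set R := A'.submatrix iZX iZX with hR
  -- positive definiteness of pieces
  have hA'pd : A'.PosDef := hA.inv
  have hPpd : P.PosDef := posDef_submatrix_inj hA'pd hiWinj
  have hCsub : A.submatrix iZX iZX = C := by
    ext i j; exact hAC i j
  have hCpd : C.PosDef := hCsub ▸ posDef_submatrix_inj hA hiZXinj
  have hdetA : A.det ≠ 0 := ne_of_gt hA.det_pos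
  have hdetB : B.det ≠ 0 := ne_of_gt hB.det_pos
  have hdetC : C.det ≠ 0 := ne_of_gt hCpd.det_pos
  have hdetP : P.det ≠ 0 := ne_of_gt hPpd.det_pos
  haveI : Invertible P := P.invertibleOfIsUnitDet (isUnit_iff_ne_zero.mpr hdetP)
  -- block decompositions over X
  have hXblocks : A.submatrix ⇑eX ⇑eX =
      fromBlocks (A.submatrix iW iW) (A.submatrix iW iZX) (A.submatrix iZX iW) C := by
    ext (w | z) (w' | z') <;>
      simp only [submatrix_apply, heX, Equiv.coe_fn_mk, Sum.elim_inl, Sum.elim_inr,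
        fromBlocks_apply₁₁, fromBlocks_apply₁₂, fromBlocks_apply₂₁, fromBlocks_apply₂₂]
    exact hAC z z'
  have hX'blocks : A'.submatrix ⇑eX ⇑eX = fromBlocks P Qm Qt R := by
    ext (w | z) (w' | z') <;> rfl
  have hmul : A.submatrix ⇑eX ⇑eX * A'.submatrix ⇑eX ⇑eX = 1 := by
    rw [submatrix_mul_equiv A A' _ eX _, hA', A.mul_nonsing_inv (isUnit_iff_ne_zero.mpr hdetA),
      submatrix_one_equiv]
  rw [hXblocks, hX'blocks, fromBlocks_multiply, ← fromBlocks_one] at hmul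
  have heq21 : A.submatrix iZX iW * P + C * Qt = 0 := by
    have := congrArg Matrix.toBlocks₂₁ hmul
    rw [Matrix.toBlocks_fromBlocks₂₁, Matrix.toBlocks_fromBlocks₂₁] at this
    exact this
  have heq22 : A.submatrix iZX iW * Qm + C * R = 1 := by
    have := congrArg Matrix.toBlocks₂₂ hmul
    rw [Matrix.toBlocks_fromBlocks₂₂, Matrix.toBlocks_fromBlocks₂₂] at this
    exact this
  have hPinv : P * P⁻¹ = 1 := P.mul_nonsing_inv (isUnit_iff_ne_zero.mpr hdetP)
  have hSchur : R - Qt * P⁻¹ * Qm = C' := by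
    rw [hC']
    symm
    apply Matrix.inv_eq_right_inv
    have h1 : C * R = 1 - A.submatrix iZX iW * Qm := eq_sub_of_add_eq' heq22
    have h2 : C * Qt = -(A.submatrix iZX iW * P) := eq_neg_of_add_eq_zero_right heq21
    have h3 : C * (Qt * P⁻¹ * Qm) = -(A.submatrix iZX iW * Qm) := by
      calc C * (Qt * P⁻¹ * Qm) = C * Qt * P⁻¹ * Qm := by
            rw [Matrix.mul_assoc, Matrix.mul_assoc, Matrix.mul_assoc]
        _ = -(A.submatrix iZX iW * P) * P⁻¹ * Qm := by rw [h2]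
        _ = -(A.submatrix iZX iW * (P * P⁻¹) * Qm) := by
            simp only [Matrix.neg_mul, Matrix.mul_assoc]
        _ = -(A.submatrix iZX iW * Qm) := by rw [hPinv, Matrix.mul_one]
    rw [Matrix.mul_sub, h1, h3]
    abel
  -- the coupling matrix, reindexed into blocks
  set N : Matrix (((X ∩ Y : Finset Q) : Type _) ⊕ {q : Q // q ∉ X}) (((X ∩ Y : Finset Q) : Type _) ⊕ {q : Q // q ∉ X}) ℝ :=
    B'.submatrix ⇑eY ⇑eY + fromBlocks (R - C') 0 0 0 with hN
  set M := zeroExtend A' + zeroExtend B' - zeroExtend C' with hMdef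
  have hMblocks : M.submatrix ⇑e ⇑e =
      fromBlocks P (fromCols Qm 0) (fromRows Qt 0) N := by
    have mW : ∀ w : {q : Q // q ∉ Y}, ((↑w : Q) ∈ Y) = False := fun w => eq_false w.2
    have mWX : ∀ w : {q : Q // q ∉ Y}, ((↑w : Q) ∈ X) = True := fun w => eq_true (hWX _ w.2)
    have mV : ∀ v : {q : Q // q ∉ X}, ((↑v : Q) ∈ X) = False := fun v => eq_false v.2
    have mVY : ∀ v : {q : Q // q ∉ X}, ((↑v : Q) ∈ Y) = True := fun v => eq_true (hVY _ v.2)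
    have mZX : ∀ z : ((X ∩ Y : Finset Q) : Type _), ((↑z : Q) ∈ X) = True :=
      fun z => eq_true (Finset.mem_of_mem_inter_left z.2)
    have mZY : ∀ z : ((X ∩ Y : Finset Q) : Type _), ((↑z : Q) ∈ Y) = True :=
      fun z => eq_true (Finset.mem_of_mem_inter_right z.2)
    ext i j
    obtain w | z | v := i <;> obtain w' | z' | v' := j <;>
      simp [hMdef, zeroExtend, he, hN, heY, Finset.mem_inter, mW, mWX, mV, mVY, mZX, mZY,
        fromCols, fromRows_apply_inl, fromRows_apply_inr, hiW, hiZX, hiZY, hiV, hP, hQm, hQt, hR] <;>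
      ring
  -- determinant of M
  have hdetM : M.det = A'.det * C.det * B'.det := by
    have h0 := Matrix.det_submatrix_equiv_self e M
    rw [← h0, hMblocks, det_fromBlocks₁₁, invOf_eq_nonsing_inv]
    have hprod : fromRows Qt (0 : Matrix {q : Q // q ∉ X} {q : Q // q ∉ Y} ℝ) * P⁻¹ *
        fromCols Qm (0 : Matrix {q : Q // q ∉ Y} {q : Q // q ∉ X} ℝ) =
        fromBlocks (Qt * P⁻¹ * Qm) 0 0 (0 : Matrix {q : Q // q ∉ X} {q : Q // q ∉ X} ℝ) := by
      rw [fromRows_mul, fromRows_mul_fromCols]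
      simp
    rw [hprod]
    have hRC : R - C' = Qt * P⁻¹ * Qm := by rw [← hSchur]; abel
    have hNB : N - fromBlocks (Qt * P⁻¹ * Qm) 0 0 0 = B'.submatrix ⇑eY ⇑eY := by
      rw [hN, hRC]
      abel
    rw [hNB, det_submatrix_equiv_self]
    have hdetA' : A'.det = P.det * C'.det := by
      rw [← det_submatrix_equiv_self eX A', hX'blocks, det_fromBlocks₁₁,
        invOf_eq_nonsing_inv, hSchur]
    have hdetC' : C'.det = C.det⁻¹ := by rw [hC', det_nonsing_inv, Ring.inverse_eq_inv]
    rw [hdetA', hdetC']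
    field_simp
  -- conclude
  have hdetA'' : A'.det = A.det⁻¹ := by rw [hA', det_nonsing_inv, Ring.inverse_eq_inv]
  have hdetB'' : B'.det = B.det⁻¹ := by rw [hB', det_nonsing_inv, Ring.inverse_eq_inv]
  rw [det_nonsing_inv, Ring.inverse_eq_inv, hdetM, hdetA'', hdetB'']
  field_simp
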